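/- Rigidity for the homogeneous cohomology equation with dissipation: let 0 < λ < 1, ω ∈ ℝ², and let h : ℝ² → ℂ be continuous and 2π-periodic in each variable. If h(ψ + 2πω) − (1+λ) h(ψ) + λ h(ψ − 2πω) = 0 for all ψ ∈ ℝ², then h(ψ + 2πω) = h(ψ) for all ψ ∈ ℝ². -/

import Mathlib

open Complex Real

/-- Rigidity for the homogeneous cohomology equation with dissipation. -/
theorem homogeneous_cohomology_rigidity (l : ℝ) (hl0 : 0 < l) (hl1 : l < 1)
    (ω : ℝ × ℝ) (h : ℝ × ℝ → ℂ)
    (hc : Continuous h)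
    (hper1 : ∀ ψ : ℝ × ℝ, h (ψ.1 + 2 * π, ψ.2) = h ψ)
    (hper2 : ∀ ψ : ℝ × ℝ, h (ψ.1, ψ.2 + 2 * π) = h ψ)
    (heq : ∀ ψ : ℝ × ℝ,
      h (ψ.1 + 2 * π * ω.1, ψ.2 + 2 * π * ω.2) - (1 + (l : ℂ)) * h ψ
        + (l : ℂ) * h (ψ.1 - 2 * π * ω.1, ψ.2 - 2 * π * ω.2) = 0) :
    ∀ ψ : ℝ × ℝ, h (ψ.1 + 2 * π * ω.1, ψ.2 + 2 * π * ω.2) = h ψ := by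
  have hπ : (0:ℝ) < 2 * π := by positivity
  -- integer periodicity
  have hZ1 : ∀ (k : ℤ) (x y : ℝ), h (x + 2 * π * k, y) = h (x, y) := by
    intro k x y
    have hp : Function.Periodic (fun x => h (x, y)) (2 * π) := fun t => hper1 (t, y)
    have := (hp.int_mul k) x
    simpa [mul_comm, mul_assoc, mul_left_comm] using this
  have hZ2 : ∀ (k : ℤ) (x y : ℝ), h (x, y + 2 * π * k) = h (x, y) := by
    intro k x y
    have hp : Function.Periodic (fun t => h (x, t)) (2 * π) := fun t => hper2 (x, t)
    have := (hp.int_mul k) y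
    simpa [mul_comm, mul_assoc, mul_left_comm] using this
  -- boundedness
  obtain ⟨M, hM⟩ : ∃ M, ∀ ψ : ℝ × ℝ, ‖h ψ‖ ≤ M := by
    have hK : IsCompact (Set.Icc (0:ℝ) (2*π) ×ˢ Set.Icc (0:ℝ) (2*π)) :=
      isCompact_Icc.prod isCompact_Icc
    obtain ⟨M, hM⟩ := hK.exists_bound_of_continuousOn hc.continuousOn
    refine ⟨M, fun ψ => ?_⟩
    set x' : ℝ := 2 * π * Int.fract (ψ.1 / (2 * π)) with hx'
    set y' : ℝ := 2 * π * Int.fract (ψ.2 / (2 * π)) with hy'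
    have hxmem : x' ∈ Set.Icc (0:ℝ) (2*π) := by
      constructor
      · exact mul_nonneg hπ.le (Int.fract_nonneg _)
      · have := (Int.fract_lt_one (ψ.1 / (2 * π))).le
        nlinarith [Int.fract_nonneg (ψ.1 / (2 * π))]
    have hymem : y' ∈ Set.Icc (0:ℝ) (2*π) := by
      constructor
      · exact mul_nonneg hπ.le (Int.fract_nonneg _)
      · have := (Int.fract_lt_one (ψ.2 / (2 * π))).le
        nlinarith [Int.fract_nonneg (ψ.2 / (2 * π))]
    have ex : ψ.1 = x' + 2 * π * (⌊ψ.1 / (2 * π)⌋ : ℤ) := by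
      rw [hx', Int.fract]
      field_simp
      ring
    have ey : ψ.2 = y' + 2 * π * (⌊ψ.2 / (2 * π)⌋ : ℤ) := by
      rw [hy', Int.fract]
      field_simp
      ring
    have : h ψ = h (x', y') := by
      conv_lhs => rw [show ψ = (ψ.1, ψ.2) from rfl, ex, ey]
      rw [hZ1, hZ2]
    rw [this]
    exact hM (x', y') (Set.mk_mem_prod hxmem hymem)
  have hMpos : 0 ≤ M := le_trans (norm_nonneg _) (hM (0,0))
  set g : ℝ × ℝ → ℂ := fun ψ => h (ψ.1 + 2*π*ω.1, ψ.2 + 2*π*ω.2) - h ψ with hg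
  have key : ∀ ψ : ℝ × ℝ, g ψ = (l:ℂ) * g (ψ.1 - 2*π*ω.1, ψ.2 - 2*π*ω.2) := by
    intro ψ
    have e : ((ψ.1 - 2*π*ω.1) + 2*π*ω.1, (ψ.2 - 2*π*ω.2) + 2*π*ω.2) = ψ := by
      rw [Prod.mk.injEq]; constructor <;> ring
    simp only [hg, e]
    linear_combination heq ψ
  have iter : ∀ (n : ℕ) (ψ : ℝ × ℝ),
      g ψ = (l:ℂ)^n * g (ψ.1 - 2*π*ω.1*n, ψ.2 - 2*π*ω.2*n) := by
    intro n
    induction n with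
    | zero => intro ψ; simp
    | succ n ih =>
      intro ψ
      rw [ih ψ, key (ψ.1 - 2*π*ω.1*n, ψ.2 - 2*π*ω.2*n)]
      have e : ((ψ.1 - 2*π*ω.1*n) - 2*π*ω.1, (ψ.2 - 2*π*ω.2*n) - 2*π*ω.2)
          = (ψ.1 - 2*π*ω.1*(n+1:ℕ), ψ.2 - 2*π*ω.2*(n+1:ℕ)) := by
        rw [Prod.mk.injEq]; constructor <;> push_cast <;> ring
      rw [e]; ring
  have hzero : ∀ ψ : ℝ × ℝ, g ψ = 0 := by
    intro ψ
    have hb : ∀ n : ℕ, ‖g ψ‖ ≤ l^n * (2*M) := by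
      intro n
      rw [iter n ψ, norm_mul]
      have h1 : ‖((l:ℂ))^n‖ = l^n := by
        rw [norm_pow, Complex.norm_real, Real.norm_eq_abs, abs_of_pos hl0]
      rw [h1]
      have h2 : ‖g (ψ.1 - 2*π*ω.1*n, ψ.2 - 2*π*ω.2*n)‖ ≤ 2*M := by
        simp only [hg]
        calc ‖_ - _‖ ≤ ‖_‖ + ‖_‖ := norm_sub_le _ _
          _ ≤ M + M := add_le_add (hM _) (hM _)
          _ = 2*M := by ring
      have h3 : (0:ℝ) ≤ l^n := by positivity
      exact mul_le_mul_of_nonneg_left h2 h3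
    have ht : Filter.Tendsto (fun n : ℕ => l^n * (2*M)) Filter.atTop (nhds 0) := by
      have := tendsto_pow_atTop_nhds_zero_of_lt_one hl0.le hl1
      simpa using this.mul_const (2*M)
    have : ‖g ψ‖ ≤ 0 := ge_of_tendsto' ht hb
    simpa using le_antisymm this (norm_nonneg _)
  intro ψ
  have := hzero ψ
  simp only [hg] at this
  exact sub_eq_zero.mp this
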